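/- Let a, b be positive rationals with a < b, and W a positive integer. If P/Q is the reduced fraction in (a, b) with minimal denominator and minimal numerator, then Q/(W·Q + P) is the reduced fraction in (1/(W+b), 1/(W+a)) with minimal denominator and minimal numerator. -/
import Mathlib

theorem stmt4 (a b : ℚ) (ha : 0 < a) (hab : a < b) (W : ℕ) (hW : 0 < W)
    (P Q : ℕ) (hP : 0 < P) (hQ : 0 < Q) (hcop : Nat.Coprime P Q)
    (hmem : a < (P : ℚ) / Q ∧ (P : ℚ) / Q < b)
    (hminden : ∀ p q : ℕ, 0 < p → 0 < q → Nat.Coprime p q →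
      a < (p : ℚ) / q → (p : ℚ) / q < b → Q ≤ q)
    (hminnum : ∀ p q : ℕ, 0 < p → 0 < q → Nat.Coprime p q →
      a < (p : ℚ) / q → (p : ℚ) / q < b → P ≤ p) :
    Nat.Coprime Q (W * Q + P) ∧
    (1 / ((W : ℚ) + b) < (Q : ℚ) / (W * Q + P) ∧
      (Q : ℚ) / (W * Q + P) < 1 / ((W : ℚ) + a)) ∧
    (∀ p q : ℕ, 0 < p → 0 < q → Nat.Coprime p q →
      1 / ((W : ℚ) + b) < (p : ℚ) / q → (p : ℚ) / q < 1 / ((W : ℚ) + a) →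
      W * Q + P ≤ q ∧ Q ≤ p) := by
  have hQQ : (0:ℚ) < (Q:ℚ) := by exact_mod_cast hQ
  have hPP : (0:ℚ) < (P:ℚ) := by exact_mod_cast hP
  have hWW : (0:ℚ) < (W:ℚ) := by exact_mod_cast hW
  obtain ⟨hm1, hm2⟩ := hmem
  have hb : (0:ℚ) < b := ha.trans hab
  have hWa : (0:ℚ) < (W:ℚ) + a := by linarith
  have hWb : (0:ℚ) < (W:ℚ) + b := by linarith
  have hden : (0:ℚ) < (W:ℚ) * Q + P := by positivity
  refine ⟨?_, ⟨?_, ?_⟩, ?_⟩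
  · have := (Nat.coprime_add_mul_left_right Q P W).mpr hcop.symm
    simpa [Nat.add_comm, Nat.mul_comm] using this
  · rw [div_lt_div_iff₀ hWb (by push_cast; exact hden)]
    push_cast
    rw [div_lt_iff₀ hQQ] at hm2
    nlinarith
  · rw [div_lt_div_iff₀ (by push_cast; exact hden) hWa]
    push_cast
    rw [lt_div_iff₀ hQQ] at hm1
    nlinarith
  · intro p q hp hq hc h1 h2
    have hpp : (0:ℚ) < (p:ℚ) := by exact_mod_cast hp
    have hqq : (0:ℚ) < (q:ℚ) := by exact_mod_cast hq
    rw [div_lt_div_iff₀ hWb hqq] at h1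
    rw [div_lt_div_iff₀ hqq hWa] at h2
    -- W*p < q
    have hWp : W * p < q := by
      have : (W:ℚ) * p < q := by nlinarith
      exact_mod_cast this
    set p' : ℕ := q - W * p with hp'
    have hp'pos : 0 < p' := by omega
    have hcast : (p' : ℚ) = (q:ℚ) - W * p := by
      have : (p' : ℚ) + W * p = q := by
        push_cast [hp']
        have := Nat.sub_add_cancel (le_of_lt hWp)
        exact_mod_cast congrArg (Nat.cast : ℕ → ℚ) this
      linarith
    have hc' : Nat.Coprime p' p := by
      have hqe : q = p' + W * p := by omega
      have h := hc
      rw [hqe] at h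
      exact ((Nat.coprime_add_mul_right_right p p' W).mp h).symm
    have ha' : a < (p' : ℚ) / p := by
      rw [lt_div_iff₀ hpp, hcast]; nlinarith
    have hb' : (p' : ℚ) / p < b := by
      rw [div_lt_iff₀ hpp, hcast]; nlinarith
    have hQle : Q ≤ p := hminden p' p hp'pos hp hc' ha' hb'
    have hPle : P ≤ p' := hminnum p' p hp'pos hp hc' ha' hb'
    constructor
    · calc W * Q + P ≤ W * p + p' := by
            exact Nat.add_le_add (Nat.mul_le_mul_left W hQle) hPle
        _ = q := by omega
    · exact hQle
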